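/- Let H ⊆ ℝ^ℓ be an affine hyperplane, H⁺ one of the two open half-spaces bounded by H, and F ⊆ ℝ^ℓ an affine subspace. Let d(x, S) denote the Euclidean distance from x to a set S. Then U = {x ∈ H⁺ : d(x, F) < d(x, H)} is an open convex subset of ℝ^ℓ. -/

import Mathlib

open Metric
open scoped RealInnerProductSpace

theorem isOpen_and_convex_halfspace_dist_lt {ℓ : ℕ}
    (g : EuclideanSpace ℝ (Fin ℓ) →ᵃ[ℝ] ℝ) (hg : g.linear ≠ 0)
    (F : AffineSubspace ℝ (EuclideanSpace ℝ (Fin ℓ)))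
    (hF : (F : Set (EuclideanSpace ℝ (Fin ℓ))).Nonempty) :
    IsOpen {x : EuclideanSpace ℝ (Fin ℓ) |
        0 < g x ∧
          Metric.infDist x (F : Set (EuclideanSpace ℝ (Fin ℓ)))
            < Metric.infDist x {y | g y = 0}} ∧
      Convex ℝ {x : EuclideanSpace ℝ (Fin ℓ) |
        0 < g x ∧
          Metric.infDist x (F : Set (EuclideanSpace ℝ (Fin ℓ)))
            < Metric.infDist x {y | g y = 0}} := by
  set E := EuclideanSpace ℝ (Fin ℓ)
  set f : E →L[ℝ] ℝ := LinearMap.toContinuousLinearMap g.linear with hf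
  set v : E := (InnerProductSpace.toDual ℝ E).symm f with hv
  have hvf : ∀ x : E, ⟪v, x⟫ = g.linear x := fun x =>
    InnerProductSpace.toDual_symm_apply
  have hv0 : v ≠ 0 := by
    intro h
    apply hg
    ext x
    have := hvf x
    rw [h, inner_zero_left] at this
    simpa using this.symm
  have hvn : (0:ℝ) < ‖v‖ := norm_pos_iff.2 hv0
  -- distance to the hyperplane
  have key : ∀ x : E, Metric.infDist x {y : E | g y = 0} = |g x| / ‖v‖ := by
    intro x
    set y0 : E := x - ((g x) / ‖v‖ ^ 2) • v with hy0
    have hgy0 : g y0 = 0 := by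
      have : y0 = (-(((g x) / ‖v‖ ^ 2) • v)) +ᵥ x := by
        simp [hy0, sub_eq_neg_add]
      rw [this, AffineMap.map_vadd]
      have : g.linear (-(((g x) / ‖v‖ ^ 2) • v)) = -(g x) := by
        rw [map_neg, map_smul]
        have : g.linear v = ‖v‖ ^ 2 := by
          rw [← hvf v, real_inner_self_eq_norm_sq]
        rw [this]
        rw [smul_eq_mul, div_mul_cancel₀ _ (pow_ne_zero 2 hvn.ne')]
      simp [this]
    have hdist : dist x y0 = |g x| / ‖v‖ := by
      rw [dist_eq_norm]
      have : x - y0 = ((g x) / ‖v‖ ^ 2) • v := by simp [hy0]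
      rw [this, norm_smul]
      rw [Real.norm_eq_abs, abs_div]
      rw [abs_of_nonneg (by positivity : (0:ℝ) ≤ ‖v‖ ^ 2)]
      field_simp
    have hne : ({y : E | g y = 0}).Nonempty := ⟨y0, hgy0⟩
    refine le_antisymm ?_ ?_
    · calc Metric.infDist x {y : E | g y = 0} ≤ dist x y0 :=
            Metric.infDist_le_dist_of_mem hgy0
        _ = |g x| / ‖v‖ := hdist
    · by_contra hcon
      push_neg at hcon
      obtain ⟨y, hy, hlt⟩ := (Metric.infDist_lt_iff hne).1 hcon
      refine absurd hlt (not_lt.2 ?_)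
      have hgy : g y = 0 := hy
      have : g x = ⟪v, x - y⟫ := by
        rw [hvf, ← vsub_eq_sub, AffineMap.linearMap_vsub, vsub_eq_sub, hgy, sub_zero]
      rw [div_le_iff₀ hvn]
      calc |g x| = |⟪v, x - y⟫| := by rw [this]
        _ ≤ ‖v‖ * ‖x - y‖ := by
            simpa using abs_real_inner_le_norm v (x - y)
        _ = dist x y * ‖v‖ := by rw [dist_eq_norm]; ring
  constructor
  · have h1 : IsOpen {x : E | 0 < g x} := by
      have : Continuous g := g.continuous_of_finiteDimensional
      exact isOpen_lt continuous_const this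
    have h2 : IsOpen {x : E |
        Metric.infDist x (F : Set E) < Metric.infDist x {y : E | g y = 0}} :=
      isOpen_lt (continuous_infDist_pt _) (continuous_infDist_pt _)
    exact h1.inter h2
  · intro x hx y hy a b ha hb hab
    obtain ⟨hx1, hx2⟩ := hx
    obtain ⟨hy1, hy2⟩ := hy
    have hgc : g (a • x + b • y) = a * g x + b * g y := by
      simpa using Convex.combo_affine_apply (f := g) hab
    have hgcpos : 0 < g (a • x + b • y) := by
      rw [hgc]
      rcases eq_or_lt_of_le ha with ha' | ha'
      · have : b = 1 := by linarith
        simp [← ha', this, hy1]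
      · have : 0 ≤ b * g y := mul_nonneg hb hy1.le
        nlinarith
    refine ⟨hgcpos, ?_⟩
    rw [key] at hx2 hy2 ⊢
    rw [abs_of_pos hx1] at hx2
    rw [abs_of_pos hy1] at hy2
    rw [abs_of_pos hgcpos, hgc]
    obtain ⟨px, hpxF, hpx⟩ := (Metric.infDist_lt_iff hF).1 hx2
    obtain ⟨py, hpyF, hpy⟩ := (Metric.infDist_lt_iff hF).1 hy2
    have hmem : a • px + b • py ∈ (F : Set E) :=
      F.convex hpxF hpyF ha hb hab
    have hd : dist (a • x + b • y) (a • px + b • py)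
        ≤ a * dist x px + b * dist y py := by
      calc dist (a • x + b • y) (a • px + b • py)
          ≤ dist (a • x) (a • px) + dist (b • y) (b • py) :=
            dist_add_add_le _ _ _ _
        _ = a * dist x px + b * dist y py := by
            rw [dist_smul₀, dist_smul₀, Real.norm_eq_abs, Real.norm_eq_abs,
              abs_of_nonneg ha, abs_of_nonneg hb]
    have hstrict : a * dist x px + b * dist y py
        < (a * g x + b * g y) / ‖v‖ := by
      rw [add_div]
      rw [mul_div_assoc, mul_div_assoc]
      rcases eq_or_lt_of_le ha with ha' | ha'
      · have hb1 : b = 1 := by linarith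
        rw [← ha', hb1]
        simpa using hpy
      · exact add_lt_add_of_lt_of_le (mul_lt_mul_of_pos_left hpx ha')
          (mul_le_mul_of_nonneg_left hpy.le hb)
    calc Metric.infDist (a • x + b • y) (F : Set E)
        ≤ dist (a • x + b • y) (a • px + b • py) :=
          Metric.infDist_le_dist_of_mem hmem
      _ ≤ a * dist x px + b * dist y py := hd
      _ < (a * g x + b * g y) / ‖v‖ := hstrict
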